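/- Fix a ∈ (0,1) and μ > 0 with sin(μa) ≠ 0 and sin(μ(1−a)) ≠ 0, and set c = f_a(μ). Then for every C ≠ 0, the function u defined by u(x) = C·sin(μx) for x ∈ [0,a] and u(x) = C·(sin(μa)/sin(μ(1−a)))·sin(μ(1−x)) for x ∈ [a,1] is well-defined and continuous at a, is an admissible function (with jump coefficient c), and is a classical eigenfunction with eigenvalue μ². -/

import Mathlib

open Set Real MeasureTheory

noncomputable section

/-- `u : [0,1] → ℝ` (modelled as a function on `ℝ`) is *admissible* for the operator `A`
with jump coefficient `c` at `a`: continuous on `[0,1]`, twice continuously differentiable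
on `[0,a]` and on `[a,1]` (with one-sided derivatives at `a`), vanishing at `0` and `1`,
and satisfying the jump condition `u'(a⁺) − u'(a⁻) = c·u(a)` (the one-sided derivatives at
`a` being the derivatives within `[a,1]` and `[0,a]` respectively). -/
def Admissible (a c : ℝ) (u : ℝ → ℝ) : Prop :=
  ContinuousOn u (Icc 0 1) ∧
  ContDiffOn ℝ 2 u (Icc 0 a) ∧
  ContDiffOn ℝ 2 u (Icc a 1) ∧
  u 0 = 0 ∧ u 1 = 0 ∧
  derivWithin u (Icc a 1) a - derivWithin u (Icc 0 a) a = c * u a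

/-- `u` is a *classical eigenfunction* of `A` (jump coefficient `c` at `a`) with
eigenvalue `lam`: admissible, not identically zero on `[0,1]`, and satisfying
`−u'' = lam·u` on `(0,a) ∪ (a,1)`. -/
def IsEigenfunction (a c lam : ℝ) (u : ℝ → ℝ) : Prop :=
  Admissible a c u ∧ (∃ x ∈ Icc (0 : ℝ) 1, u x ≠ 0) ∧
  ∀ x ∈ Ioo 0 a ∪ Ioo a 1, -(deriv (deriv u) x) = lam * u x

/-- The function `f_a(μ) = −μ·sin(μ)/(sin(μa)·sin(μ(1−a)))`. -/
def fA (a μ : ℝ) : ℝ :=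
  -(μ * Real.sin μ) / (Real.sin (μ * a) * Real.sin (μ * (1 - a)))


private lemma hd_sin (c μ x : ℝ) :
    HasDerivAt (fun y => c * Real.sin (μ * y)) (c * μ * Real.cos (μ * x)) x := by
  have h1 : HasDerivAt (fun y : ℝ => μ * y) μ x := by
    simpa using (hasDerivAt_id x).const_mul μ
  have h2 := ((Real.hasDerivAt_sin (μ * x)).comp x h1).const_mul c
  exact h2.congr_deriv (by ring)

private lemma hd_cos (c μ x : ℝ) :
    HasDerivAt (fun y => c * Real.cos (μ * y)) (-(c * μ * Real.sin (μ * x))) x := by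
  have h1 : HasDerivAt (fun y : ℝ => μ * y) μ x := by
    simpa using (hasDerivAt_id x).const_mul μ
  have h2 := ((Real.hasDerivAt_cos (μ * x)).comp x h1).const_mul c
  exact h2.congr_deriv (by ring)

private lemma hd_sin' (c μ x : ℝ) :
    HasDerivAt (fun y => c * Real.sin (μ * (1 - y))) (-(c * μ * Real.cos (μ * (1 - x)))) x := by
  have h1 : HasDerivAt (fun y : ℝ => μ * (1 - y)) (μ * (-1)) x :=
    ((hasDerivAt_id x).const_sub 1).const_mul μ
  have h2 := ((Real.hasDerivAt_sin (μ * (1 - x))).comp x h1).const_mul c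
  exact h2.congr_deriv (by ring)

private lemma hd_cos' (c μ x : ℝ) :
    HasDerivAt (fun y => c * Real.cos (μ * (1 - y))) (c * μ * Real.sin (μ * (1 - x))) x := by
  have h1 : HasDerivAt (fun y : ℝ => μ * (1 - y)) (μ * (-1)) x :=
    ((hasDerivAt_id x).const_sub 1).const_mul μ
  have h2 := ((Real.hasDerivAt_cos (μ * (1 - x))).comp x h1).const_mul c
  exact h2.congr_deriv (by ring)

/-- **The explicit eigenfunctions of `A`.** For `μ > 0` with `sin(μa) ≠ 0` and
`sin(μ(1−a)) ≠ 0` and `c = f_a(μ)`, for every `C ≠ 0` the function equal to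
`C·sin(μx)` on `[0,a]` and to `C·(sin(μa)/sin(μ(1−a)))·sin(μ(1−x))` on `[a,1]`
is well defined and continuous at `a`, is admissible with jump coefficient `c`,
and is a classical eigenfunction with eigenvalue `μ²`. -/
theorem explicit_eigenfunction {a μ : ℝ} (ha : a ∈ Ioo (0 : ℝ) 1) (hμ : 0 < μ)
    (h1 : Real.sin (μ * a) ≠ 0) (h2 : Real.sin (μ * (1 - a)) ≠ 0)
    {C : ℝ} (hC : C ≠ 0) (u : ℝ → ℝ)
    (hu : ∀ x : ℝ, u x = if x ≤ a then C * Real.sin (μ * x)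
      else C * (Real.sin (μ * a) / Real.sin (μ * (1 - a))) * Real.sin (μ * (1 - x))) :
    ContinuousAt u a ∧ Admissible a (fA a μ) u ∧
      IsEigenfunction a (fA a μ) (μ ^ 2) u := by
  obtain ⟨ha0, ha1⟩ := ha
  set K : ℝ := C * (Real.sin (μ * a) / Real.sin (μ * (1 - a))) with hK
  set g : ℝ → ℝ := fun x => C * Real.sin (μ * x) with hgdef
  set h : ℝ → ℝ := fun x => K * Real.sin (μ * (1 - x)) with hhdef
  have hga : g a = h a := by
    simp only [hgdef, hhdef, hK]
    field_simp
  have hg : ∀ x, x ≤ a → u x = g x := fun x hx => by rw [hu x, if_pos hx]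
  have hh : ∀ x, a ≤ x → u x = h x := by
    intro x hx
    rcases eq_or_lt_of_le hx with rfl | hx'
    · rw [hg a le_rfl, hga]
    · rw [hu x, if_neg (not_le.mpr hx')]
  have hgc : Continuous g := by
    exact continuous_const.mul (Real.continuous_sin.comp (continuous_const.mul continuous_id))
  have hhc : Continuous h := by
    exact continuous_const.mul (Real.continuous_sin.comp
      (continuous_const.mul (continuous_const.sub continuous_id)))
  have huc : Continuous u := by
    have : u = fun x => if x ≤ a then g x else h x := funext fun x => by
      rw [hu x]
    rw [this]
    exact Continuous.if_le hgc hhc continuous_id continuous_const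
      (fun x hx => by rw [hx, hga])
  -- smoothness
  have hgCD : ContDiff ℝ 2 g :=
    contDiff_const.mul (Real.contDiff_sin.comp (contDiff_const.mul contDiff_id))
  have hhCD : ContDiff ℝ 2 h :=
    contDiff_const.mul (Real.contDiff_sin.comp
      (contDiff_const.mul (contDiff_const.sub contDiff_id)))
  have hcd1 : ContDiffOn ℝ 2 u (Icc 0 a) :=
    (hgCD.contDiffOn).congr (fun x hx => hg x hx.2)
  have hcd2 : ContDiffOn ℝ 2 u (Icc a 1) :=
    (hhCD.contDiffOn).congr (fun x hx => hh x hx.1)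
  -- one-sided derivatives at a
  have hdwl : derivWithin u (Icc 0 a) a = C * μ * Real.cos (μ * a) := by
    rw [derivWithin_congr (fun x hx => hg x hx.2) (hg a le_rfl)]
    rw [(hd_sin C μ a).differentiableAt.derivWithin
      ((uniqueDiffOn_Icc ha0) a (right_mem_Icc.mpr ha0.le))]
    exact (hd_sin C μ a).deriv
  have hdwr : derivWithin u (Icc a 1) a = -(K * μ * Real.cos (μ * (1 - a))) := by
    rw [derivWithin_congr (fun x hx => hh x hx.1) (hh a le_rfl)]
    rw [(hd_sin' K μ a).differentiableAt.derivWithin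
      ((uniqueDiffOn_Icc ha1) a (left_mem_Icc.mpr ha1.le))]
    exact (hd_sin' K μ a).deriv
  have hjump : derivWithin u (Icc a 1) a - derivWithin u (Icc 0 a) a = fA a μ * u a := by
    rw [hdwl, hdwr, hg a le_rfl]
    simp only [hgdef, hK, fA]
    have hsum : Real.sin μ = Real.sin (μ * a) * Real.cos (μ * (1 - a)) +
        Real.cos (μ * a) * Real.sin (μ * (1 - a)) := by
      rw [← Real.sin_add]; ring_nf
    rw [hsum]
    field_simp
    ring
  have hadm : Admissible a (fA a μ) u := by
    refine ⟨huc.continuousOn, hcd1, hcd2, ?_, ?_, hjump⟩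
    · rw [hg 0 ha0.le]; simp [hgdef]
    · rw [hh 1 ha1.le]; simp [hhdef]
  refine ⟨huc.continuousAt, hadm, hadm, ?_, ?_⟩
  · refine ⟨a, ⟨ha0.le, ha1.le⟩, ?_⟩
    rw [hg a le_rfl]
    simp only [hgdef]
    exact mul_ne_zero hC h1
  · intro x hx
    rcases hx with hx | hx
    · have hev : u =ᶠ[nhds x] g :=
        Filter.eventuallyEq_of_mem (Iio_mem_nhds hx.2) (fun y hy => hg y (le_of_lt hy))
      rw [hev.deriv.deriv.eq_of_nhds]
      have e1 : deriv g = fun y => C * μ * Real.cos (μ * y) :=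
        funext fun y => (hd_sin C μ y).deriv
      rw [e1, (hd_cos (C * μ) μ x).deriv, hg x hx.2.le]
      simp only [hgdef]
      ring
    · have hev : u =ᶠ[nhds x] h :=
        Filter.eventuallyEq_of_mem (Ioi_mem_nhds hx.1) (fun y hy => hh y (le_of_lt hy))
      rw [hev.deriv.deriv.eq_of_nhds]
      have e1 : deriv h = fun y => -(K * μ) * Real.cos (μ * (1 - y)) := by
        funext y
        rw [(hd_sin' K μ y).deriv]; ring
      rw [e1, (hd_cos' (-(K * μ)) μ x).deriv, hh x hx.1.le]
      simp only [hhdef]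
      ring

end
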